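/- Let M be a stabilisation monoid and E an idempotent co-ideal in the co-ideal power construction M_↑ (E ⊆ M upward-closed with E·E = E, where A·B = {a·b : a∈A, b∈B}↑). Then for every a ∈ E there exist b, c, e ∈ E with e idempotent such that a ≥ b·e·c. -/

import Mathlib

/-- Axioms of a stabilisation monoid over a finite ordered monoid. -/
structure IsStabMonoid (M : Type*) [Monoid M] [PartialOrder M] [Fintype M]
    (stab : M → M) : Prop where
  mul_mono : ∀ a a' b b' : M, a ≤ a' → b ≤ b' → a * b ≤ a' * b'
  stab_idem : ∀ e : M, e * e = e → stab e * stab e = stab e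
  stab_mono : ∀ e f : M, e * e = e → f * f = f → e ≤ f → stab e ≤ stab f
  stab_consistent : ∀ a b : M, (a * b) * (a * b) = a * b → (b * a) * (b * a) = b * a →
    stab (a * b) = a * (stab (b * a) * b)
  stab_le : ∀ e : M, e * e = e → stab e ≤ e
  stab_stab : ∀ e : M, e * e = e → stab (stab e) = stab e
  stab_one : stab 1 = 1

/-- Product of co-ideals: the upward closure of the set of pairwise products. -/
def coidealMul {M : Type*} [Monoid M] [PartialOrder M] (A B : Set M) : Set M :=
  {z | ∃ a ∈ A, ∃ b ∈ B, a * b ≤ z}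

/-- In a finite monoid, some positive power of every element is idempotent. -/
lemma exists_idempotent_pow' {M : Type*} [Monoid M] [Fintype M] (m : M) :
    ∃ k : ℕ, 1 ≤ k ∧ m ^ k * m ^ k = m ^ k := by
  obtain ⟨i, j, hij, hpow⟩ :=
    Fintype.exists_ne_map_eq_of_card_lt (fun i : Fin (Fintype.card M + 1) => m ^ ((i : ℕ) + 1))
      (by simp)
  wlog hlt : (i : ℕ) < (j : ℕ) generalizing i j
  · exact this j i (Ne.symm hij) hpow.symm (by omega)
  have key : ∀ t u : ℕ, (i : ℕ) + 1 ≤ u → m ^ (u + t * ((j : ℕ) - i)) = m ^ u := by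
    intro t
    induction t with
    | zero => intro u _; simp
    | succ t ih =>
        intro u hu
        have h1 : u + (t + 1) * ((j : ℕ) - i) = (u + t * ((j : ℕ) - i)) + ((j : ℕ) - i) := by
          ring
        rw [h1]
        have hu' : (i : ℕ) + 1 ≤ u + t * ((j : ℕ) - i) := le_trans hu (Nat.le_add_right _ _)
        set v := u + t * ((j : ℕ) - i) with hv
        have h2 : m ^ (v + ((j : ℕ) - i)) = m ^ v := by
          obtain ⟨s, hs⟩ := Nat.exists_eq_add_of_le hu'
          have h3 : v + ((j : ℕ) - i) = ((j : ℕ) + 1) + s := by omega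
          rw [h3, hs, pow_add _ ((j : ℕ) + 1) s, pow_add _ ((i : ℕ) + 1) s, hpow]
        rw [h2]; exact ih u hu
  refine ⟨((i : ℕ) + 1) * ((j : ℕ) - i), ?_, ?_⟩
  · have h1 : 1 ≤ (j : ℕ) - i := by omega
    exact Nat.one_le_iff_ne_zero.mpr (by positivity)
  · set k := ((i : ℕ) + 1) * ((j : ℕ) - i) with hk
    have hik : (i : ℕ) + 1 ≤ k := by
      have h1 : 1 ≤ (j : ℕ) - i := by omega
      calc (i : ℕ) + 1 = ((i : ℕ) + 1) * 1 := by ring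
        _ ≤ k := Nat.mul_le_mul_left _ h1
    have hkey : m ^ (k + ((i : ℕ) + 1) * ((j : ℕ) - i)) = m ^ k := key _ _ hik
    rw [← pow_add]
    rwa [← hk] at hkey

/-- A nonempty list of elements of a multiplicatively closed set has product in the set. -/
lemma listProdMemAux {M : Type*} [Monoid M] (E : Set M)
    (hmul : ∀ x ∈ E, ∀ y ∈ E, x * y ∈ E) :
    ∀ l : List M, l ≠ [] → (∀ x ∈ l, x ∈ E) → l.prod ∈ E := by
  intro l
  induction l with
  | nil => intro hne _; exact absurd rfl hne
  | cons x l ih =>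
      intro _ hmem
      rw [List.prod_cons]
      rcases eq_or_ne l [] with rfl | hlne
      · simpa using hmem x (by simp)
      · exact hmul x (hmem x (by simp)) l.prod (ih hlne fun y hy => hmem y (by simp [hy]))

/-- If `E` is an idempotent co-ideal (upward-closed set with `E·E = E`) in the
co-ideal construction over a stabilisation monoid `M`, then every `a ∈ E`
satisfies `b·e·c ≤ a` for some `b, c, e ∈ E` with `e` idempotent. -/
theorem coideal_idempotent_structure {M : Type*} [Monoid M] [PartialOrder M] [Fintype M]
    (stab : M → M) (h : IsStabMonoid M stab)
    (E : Set M) (hup : ∀ x y : M, x ≤ y → x ∈ E → y ∈ E)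
    (hidem : coidealMul E E = E) :
    ∀ a ∈ E, ∃ b ∈ E, ∃ c ∈ E, ∃ e ∈ E, e * e = e ∧ b * (e * c) ≤ a := by
  intro a ha
  -- E is closed under multiplication
  have hmul : ∀ x ∈ E, ∀ y ∈ E, x * y ∈ E := by
    intro x hx y hy
    rw [← hidem]
    exact ⟨x, hx, y, hy, le_refl _⟩
  have hprodE := listProdMemAux E hmul
  -- split every element of E into a product of n elements of E, any n ≥ 1
  have hsplit : ∀ n : ℕ, ∀ z ∈ E, ∃ l : List M,
      l.length = n + 1 ∧ (∀ x ∈ l, x ∈ E) ∧ l.prod ≤ z := by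
    intro n
    induction n with
    | zero => intro z hz; exact ⟨[z], rfl, by simpa using hz, by simp⟩
    | succ n ih =>
        intro z hz
        have hz' : z ∈ coidealMul E E := by rw [hidem]; exact hz
        obtain ⟨u, hu, v, hv, huv⟩ := hz'
        obtain ⟨l, hlen, hlE, hle⟩ := ih v hv
        refine ⟨u :: l, by simp [hlen], ?_, ?_⟩
        · intro x hx
          rcases List.mem_cons.mp hx with rfl | hx
          · exact hu
          · exact hlE x hx
        · calc (u :: l).prod = u * l.prod := List.prod_cons
            _ ≤ u * v := h.mul_mono _ _ _ _ (le_refl u) hle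
            _ ≤ z := huv
  -- take a factorization of length card M + 2
  obtain ⟨l, hlen, hlE, hle⟩ := hsplit (Fintype.card M + 1) a ha
  -- pigeonhole on prefix products (l.take (i+1)).prod, i = 0, ..., card M
  obtain ⟨i, j, hij, heq⟩ :=
    Fintype.exists_ne_map_eq_of_card_lt
      (fun i : Fin (Fintype.card M + 1) => (l.take ((i : ℕ) + 1)).prod) (by simp)
  -- wlog i < j
  wlog hlt : (i : ℕ) < (j : ℕ) generalizing i j
  · exact this j i (Ne.symm hij) heq.symm (by omega)
  set I := (i : ℕ) + 1 with hI
  set J := (j : ℕ) + 1 with hJ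
  have hIJ : I < J := by omega
  have hJlen : J < l.length := by rw [hlen]; omega
  -- the three pieces
  set b := (l.take I).prod with hb
  set m := ((l.drop I).take (J - I)).prod with hm
  set c := (l.drop J).prod with hc
  -- membership in E of the pieces
  have hsubmem : ∀ l' : List M, (∀ x ∈ l', x ∈ l) → ∀ x ∈ l', x ∈ E := by
    intro l' hsub x hx; exact hlE x (hsub x hx)
  have hbE : b ∈ E := by
    refine hprodE _ ?_ ?_
    · have : (l.take I).length = I := by
        rw [List.length_take]; omega
      intro hnil; rw [hnil] at this; simp [hI] at this
    · intro x hx; exact hlE x (List.mem_of_mem_take hx)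
  have hmE : m ∈ E := by
    refine hprodE _ ?_ ?_
    · have : ((l.drop I).take (J - I)).length = J - I := by
        rw [List.length_take, List.length_drop]; omega
      intro hnil; rw [hnil] at this; simp at this; omega
    · intro x hx
      exact hlE x (List.mem_of_mem_drop (List.mem_of_mem_take hx))
  have hcE : c ∈ E := by
    refine hprodE _ ?_ ?_
    · have : (l.drop J).length = l.length - J := List.length_drop
      intro hnil; rw [hnil] at this; simp at this; omega
    · intro x hx; exact hlE x (List.mem_of_mem_drop hx)
  -- b * m = b
  have hsplitIJ : l.take J = l.take I ++ (l.drop I).take (J - I) := by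
    have hJeq : J = I + (J - I) := by omega
    have h2 : l.take (I + (J - I)) = l.take I ++ (l.drop I).take (J - I) := List.take_add
    rw [← hJeq] at h2
    exact h2
  have hbm : b * m = b := by
    have h1 : (l.take J).prod = b * m := by rw [hsplitIJ, List.prod_append]
    have h2 : (l.take J).prod = (l.take I).prod := heq.symm
    rw [← h1, h2]
  -- idempotent power of m
  obtain ⟨k, hk1, hkid⟩ := exists_idempotent_pow' m
  have hpowE : ∀ n : ℕ, m ^ (n + 1) ∈ E := by
    intro n
    induction n with
    | zero => simpa using hmE
    | succ n ih => rw [pow_succ]; exact hmul _ ih _ hmE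
  have heE : m ^ k ∈ E := by
    obtain ⟨d, rfl⟩ := Nat.exists_eq_add_of_le hk1
    have h1 : 1 + d = d + 1 := by omega
    rw [h1]; exact hpowE d
  -- b * m^k = b
  have hbmk : ∀ k : ℕ, b * m ^ k = b := by
    intro k
    induction k with
    | zero => simp
    | succ k ih =>
        rw [pow_succ, ← mul_assoc, ih, hbm]
  -- conclude
  refine ⟨b, hbE, c, hcE, m ^ k, heE, hkid, ?_⟩
  have hfinal : b * (m ^ k * c) = l.prod := by
    have hsplitJ : l.prod = (l.take J).prod * (l.drop J).prod := by
      rw [← List.prod_append, List.take_append_drop]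
    rw [← mul_assoc, hbmk _, hsplitJ, ← heq, hc]
  rw [hfinal]
  exact hle
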